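/- arXiv:2605.12161 — 3 statements merged into one kernel-verified Lean document; each statement's English description precedes it below -/
import Mathlib

section
/- The optimal value of the simplex-constrained fsFGW problem satisfies both bounds: (i) α·GW* ≤ inf{ F_S(T,w) : T ∈ U(a,b), w ∈ Δ^{d−1} }, and (ii) for every T ∈ U(a,b), inf{ F_S(T',w) : T' ∈ U(a,b), w ∈ Δ^{d−1} } ≤ (1−α) Σ_{r=1}^d s_r(T) + α GW(T) − (1−α)·min_{1≤r≤d} s_r(T); in particular the optimal simplex-constrained fsFGW value is at most the classical FGW value FGW*. -/
/-- A probability vector: nonnegative entries summing to 1. -/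
def IsProb {n : ℕ} (a : Fin n → ℝ) : Prop := (∀ i, 0 ≤ a i) ∧ ∑ i, a i = 1

/-- Membership in the transport polytope U(a,b). -/
def InU {n m : ℕ} (a : Fin n → ℝ) (b : Fin m → ℝ) (T : Matrix (Fin n) (Fin m) ℝ) : Prop :=
  (∀ i j, 0 ≤ T i j) ∧ (∀ i, ∑ j, T i j = a i) ∧ (∀ j, ∑ i, T i j = b j)

/-- Feature score `s_r(T) = Σ_{i,j} T_{ij} |X_{ir} − Y_{jr}|^q`. -/
noncomputable def score {n m d : ℕ} (q : ℝ) (X : Matrix (Fin n) (Fin d) ℝ)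
    (Y : Matrix (Fin m) (Fin d) ℝ) (T : Matrix (Fin n) (Fin m) ℝ) (r : Fin d) : ℝ :=
  ∑ i, ∑ j, T i j * |X i r - Y j r| ^ q

/-- Gromov–Wasserstein term `GW(T) = Σ |C^X_{ii'} − C^Y_{jj'}|^q T_{ij} T_{i'j'}`. -/
noncomputable def gwTerm {n m : ℕ} (q : ℝ) (CX : Matrix (Fin n) (Fin n) ℝ)
    (CY : Matrix (Fin m) (Fin m) ℝ) (T : Matrix (Fin n) (Fin m) ℝ) : ℝ :=
  ∑ i, ∑ i', ∑ j, ∑ j', |CX i i' - CY j j'| ^ q * T i j * T i' j'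

/-- Simplex-constrained fsFGW objective. -/
noncomputable def FS {n m d : ℕ} (q α : ℝ)
    (CX : Matrix (Fin n) (Fin n) ℝ) (CY : Matrix (Fin m) (Fin m) ℝ)
    (X : Matrix (Fin n) (Fin d) ℝ) (Y : Matrix (Fin m) (Fin d) ℝ)
    (T : Matrix (Fin n) (Fin m) ℝ) (w : Fin d → ℝ) : ℝ :=
  (1 - α) * ∑ r, (1 - w r) * score q X Y T r + α * gwTerm q CX CY T

lemma score_nonneg {n m d : ℕ} (q : ℝ) (X : Matrix (Fin n) (Fin d) ℝ)
    (Y : Matrix (Fin m) (Fin d) ℝ) (T : Matrix (Fin n) (Fin m) ℝ)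
    (hT : ∀ i j, 0 ≤ T i j) (r : Fin d) : 0 ≤ score q X Y T r := by
  apply Finset.sum_nonneg; intro i _
  apply Finset.sum_nonneg; intro j _
  exact mul_nonneg (hT i j) (Real.rpow_nonneg (abs_nonneg _) q)

lemma gwTerm_nonneg {n m : ℕ} (q : ℝ) (CX : Matrix (Fin n) (Fin n) ℝ)
    (CY : Matrix (Fin m) (Fin m) ℝ) (T : Matrix (Fin n) (Fin m) ℝ)
    (hT : ∀ i j, 0 ≤ T i j) : 0 ≤ gwTerm q CX CY T := by
  refine Finset.sum_nonneg fun i _ => Finset.sum_nonneg fun i' _ =>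
    Finset.sum_nonneg fun j _ => Finset.sum_nonneg fun j' _ => ?_
  exact mul_nonneg (mul_nonneg (Real.rpow_nonneg (abs_nonneg _) q) (hT i j)) (hT i' j')

lemma prodPlan_inU {n m : ℕ} (a : Fin n → ℝ) (b : Fin m → ℝ)
    (ha : IsProb a) (hb : IsProb b) :
    InU a b (fun i j => a i * b j) := by
  refine ⟨fun i j => mul_nonneg (ha.1 i) (hb.1 j), fun i => ?_, fun j => ?_⟩
  · rw [← Finset.mul_sum, hb.2, mul_one]
  · rw [← Finset.sum_mul, ha.2, one_mul]

/-- FS is nonneg for feasible points. -/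
lemma FS_nonneg {n m d : ℕ} (q α : ℝ) (hα : α ∈ Set.Icc (0:ℝ) 1)
    (CX : Matrix (Fin n) (Fin n) ℝ) (CY : Matrix (Fin m) (Fin m) ℝ)
    (X : Matrix (Fin n) (Fin d) ℝ) (Y : Matrix (Fin m) (Fin d) ℝ)
    (T : Matrix (Fin n) (Fin m) ℝ) (w : Fin d → ℝ)
    (hT : ∀ i j, 0 ≤ T i j) (hw : (∀ r, 0 ≤ w r) ∧ ∑ r, w r = 1) :
    0 ≤ FS q α CX CY X Y T w := by
  have hw1 : ∀ r, w r ≤ 1 := by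
    intro r
    calc w r ≤ ∑ r', w r' := Finset.single_le_sum (fun r' _ => hw.1 r') (Finset.mem_univ r)
    _ = 1 := hw.2
  have h1 : 0 ≤ ∑ r, (1 - w r) * score q X Y T r :=
    Finset.sum_nonneg fun r _ => mul_nonneg (by linarith [hw1 r]) (score_nonneg q X Y T hT r)
  have h2 := gwTerm_nonneg q CX CY T hT
  have := hα.1; have := hα.2
  have : 0 ≤ 1 - α := by linarith
  exact add_nonneg (mul_nonneg this h1) (mul_nonneg hα.1 h2)

/-- bounds for the simplex-constrained fsFGW value. -/
theorem simplex_fsFGW_bounds (n m d : ℕ) (hn : 1 ≤ n) (hm : 1 ≤ m) (hd : 1 ≤ d)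
    (q : ℝ) (hq : 1 ≤ q) (α : ℝ) (hα : α ∈ Set.Icc (0:ℝ) 1)
    (a : Fin n → ℝ) (b : Fin m → ℝ) (ha : IsProb a) (hb : IsProb b)
    (CX : Matrix (Fin n) (Fin n) ℝ) (CY : Matrix (Fin m) (Fin m) ℝ)
    (X : Matrix (Fin n) (Fin d) ℝ) (Y : Matrix (Fin m) (Fin d) ℝ) :
    α * sInf {v : ℝ | ∃ T, InU a b T ∧ v = gwTerm q CX CY T} ≤
      sInf {v : ℝ | ∃ T w, InU a b T ∧ ((∀ r, 0 ≤ w r) ∧ ∑ r, w r = 1) ∧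
        v = FS q α CX CY X Y T w} ∧
    ∀ T, InU a b T →
      sInf {v : ℝ | ∃ T' w, InU a b T' ∧ ((∀ r, 0 ≤ w r) ∧ ∑ r, w r = 1) ∧
        v = FS q α CX CY X Y T' w} ≤
      (1 - α) * ∑ r, score q X Y T r + α * gwTerm q CX CY T
        - (1 - α) * sInf (Set.range fun r => score q X Y T r) := by
  have r0 : Fin d := ⟨0, hd⟩
  haveI : Nonempty (Fin d) := ⟨r0⟩
  set S : Set ℝ := {v : ℝ | ∃ T w, InU a b T ∧ ((∀ r, 0 ≤ w r) ∧ ∑ r, w r = 1) ∧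
        v = FS q α CX CY X Y T w} with hS
  set G : Set ℝ := {v : ℝ | ∃ T, InU a b T ∧ v = gwTerm q CX CY T} with hG
  -- canonical w
  have hwprob : ∀ (r0 : Fin d), (∀ r : Fin d, 0 ≤ (fun r => if r = r0 then (1:ℝ) else 0) r) ∧
      ∑ r, (if r = r0 then (1:ℝ) else 0) = 1 := by
    intro r0
    constructor
    · intro r; dsimp; split <;> norm_num
    · simp
  have hT0 := prodPlan_inU a b ha hb
  have hSne : S.Nonempty :=
    ⟨_, ⟨_, _, hT0, hwprob r0, rfl⟩⟩
  have hGbdd : ∀ v ∈ G, (0:ℝ) ≤ v := by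
    rintro v ⟨T, hT, rfl⟩; exact gwTerm_nonneg q CX CY T hT.1
  have hSbdd : ∀ v ∈ S, (0:ℝ) ≤ v := by
    rintro v ⟨T, w, hT, hw, rfl⟩; exact FS_nonneg q α hα CX CY X Y T w hT.1 hw
  have hSbdd' : BddBelow S := ⟨0, hSbdd⟩
  -- value of FS at the indicator weight
  have hFSval : ∀ (T : Matrix (Fin n) (Fin m) ℝ) (r0 : Fin d),
      FS q α CX CY X Y T (fun r => if r = r0 then (1:ℝ) else 0) =
      (1 - α) * (∑ r, score q X Y T r - score q X Y T r0) + α * gwTerm q CX CY T := by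
    intro T r0
    unfold FS
    have : ∑ r, (1 - if r = r0 then (1:ℝ) else 0) * score q X Y T r =
        ∑ r, (score q X Y T r - if r = r0 then score q X Y T r else 0) := by
      refine Finset.sum_congr rfl fun r _ => ?_
      by_cases h : r = r0 <;> simp [h]
    rw [this, Finset.sum_sub_distrib, Finset.sum_ite_eq' Finset.univ r0]
    simp
  constructor
  · -- lower bound
    apply le_csInf hSne
    rintro v ⟨T, w, hT, hw, rfl⟩
    have h1 : α * gwTerm q CX CY T ≤ FS q α CX CY X Y T w := by
      have hw1 : ∀ r, w r ≤ 1 := by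
        intro r
        calc w r ≤ ∑ r', w r' :=
          Finset.single_le_sum (fun r' _ => hw.1 r') (Finset.mem_univ r)
        _ = 1 := hw.2
      have h2 : 0 ≤ ∑ r, (1 - w r) * score q X Y T r :=
        Finset.sum_nonneg fun r _ =>
          mul_nonneg (by linarith [hw1 r]) (score_nonneg q X Y T hT.1 r)
      have := hα.2
      unfold FS
      nlinarith
    have h0 : α * sInf G ≤ α * gwTerm q CX CY T := by
      apply mul_le_mul_of_nonneg_left _ hα.1
      exact csInf_le ⟨0, hGbdd⟩ ⟨T, hT, rfl⟩
    linarith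
  · -- upper bound
    intro T hT
    -- min of scores is attained
    obtain ⟨rstar, -, hrstar⟩ := Finset.exists_min_image Finset.univ (score q X Y T)
      ⟨r0, Finset.mem_univ r0⟩
    have hmin : sInf (Set.range fun r => score q X Y T r) = score q X Y T rstar := by
      apply le_antisymm
      · exact csInf_le (Set.finite_range _).bddBelow ⟨rstar, rfl⟩
      · apply le_csInf (Set.range_nonempty _)
        rintro v ⟨r, rfl⟩; exact hrstar r (Finset.mem_univ r)
    have hmem : FS q α CX CY X Y T (fun r => if r = rstar then (1:ℝ) else 0) ∈ S :=
      ⟨T, _, hT, hwprob rstar, rfl⟩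
    have h := csInf_le hSbdd' hmem
    rw [hFSval T rstar] at h
    rw [hmin]
    linarith [h]
end

section
/- The joint Ridge-regularized fsFGW problem reduces to an optimization over the transport plan alone: inf{ F_R(T,w) : T ∈ U(a,b), w ∈ [0,1]^d } = inf{ Σ_{r=1}^d g(s_r(T)) + α GW(T) : T ∈ U(a,b) }, where g(s) = (1−α)s − (1−α)²s²/(2λ) when (1−α)s ≤ λ and g(s) = λ/2 when (1−α)s > λ. -/
/-- Ridge-regularized fsFGW objective. -/
noncomputable def FR {n m d : ℕ} (q α lam : ℝ)
    (CX : Matrix (Fin n) (Fin n) ℝ) (CY : Matrix (Fin m) (Fin m) ℝ)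
    (X : Matrix (Fin n) (Fin d) ℝ) (Y : Matrix (Fin m) (Fin d) ℝ)
    (T : Matrix (Fin n) (Fin m) ℝ) (w : Fin d → ℝ) : ℝ :=
  (1 - α) * ∑ r, (1 - w r) * score q X Y T r + α * gwTerm q CX CY T
    + lam / 2 * ∑ r, (w r) ^ 2

/-- Reduced per-feature Ridge cost `g`. -/
noncomputable def ridgeG (α lam s : ℝ) : ℝ :=
  if (1 - α) * s ≤ lam then (1 - α) * s - (1 - α) ^ 2 * s ^ 2 / (2 * lam)
  else lam / 2

lemma ridge_inner_le (α lam s w : ℝ) (hlam : 0 < lam) (hw1 : w ≤ 1) :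
    ridgeG α lam s ≤ (1 - α) * ((1 - w) * s) + lam / 2 * w ^ 2 := by
  unfold ridgeG
  split_ifs with h
  · have e : (1 - α) ^ 2 * s ^ 2 / (2 * lam) * (2 * lam) = (1 - α) ^ 2 * s ^ 2 :=
      div_mul_cancel₀ _ (by positivity)
    nlinarith [sq_nonneg (lam * w - (1 - α) * s), hlam, e]
  · push_neg at h
    nlinarith [sq_nonneg (1 - w), mul_le_mul_of_nonneg_left h.le (sub_nonneg.2 hw1), hlam]

lemma ridge_inner_exists (α lam s : ℝ) (hα : α ≤ 1) (hlam : 0 < lam) (hs : 0 ≤ s) :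
    ∃ w : ℝ, 0 ≤ w ∧ w ≤ 1 ∧
      (1 - α) * ((1 - w) * s) + lam / 2 * w ^ 2 = ridgeG α lam s := by
  unfold ridgeG
  by_cases h : (1 - α) * s ≤ lam
  · refine ⟨(1 - α) * s / lam, div_nonneg (mul_nonneg (by linarith) hs) hlam.le,
      (div_le_one hlam).2 h, ?_⟩
    rw [if_pos h]; field_simp; ring
  · exact ⟨1, zero_le_one, le_refl 1, by rw [if_neg h]; ring⟩

lemma FR_rearrange {n m d : ℕ} (q α lam : ℝ)
    (CX : Matrix (Fin n) (Fin n) ℝ) (CY : Matrix (Fin m) (Fin m) ℝ)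
    (X : Matrix (Fin n) (Fin d) ℝ) (Y : Matrix (Fin m) (Fin d) ℝ)
    (T : Matrix (Fin n) (Fin m) ℝ) (w : Fin d → ℝ) :
    FR q α lam CX CY X Y T w =
      (∑ r, ((1 - α) * ((1 - w r) * score q X Y T r) + lam / 2 * (w r) ^ 2))
        + α * gwTerm q CX CY T := by
  unfold FR
  rw [Finset.sum_add_distrib, Finset.mul_sum, Finset.mul_sum]
  ring

/-- the joint Ridge fsFGW problem reduces to an optimization
over the transport plan alone, with per-feature cost `g`. -/
theorem ridge_fsFGW_reduction (n m d : ℕ) (hn : 1 ≤ n) (hm : 1 ≤ m) (hd : 1 ≤ d)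
    (q : ℝ) (hq : 1 ≤ q) (α lam : ℝ) (hα : α ∈ Set.Icc (0:ℝ) 1) (hlam : 0 < lam)
    (a : Fin n → ℝ) (b : Fin m → ℝ) (ha : IsProb a) (hb : IsProb b)
    (CX : Matrix (Fin n) (Fin n) ℝ) (CY : Matrix (Fin m) (Fin m) ℝ)
    (X : Matrix (Fin n) (Fin d) ℝ) (Y : Matrix (Fin m) (Fin d) ℝ) :
    sInf {v : ℝ | ∃ T w, InU a b T ∧ (∀ r, w r ∈ Set.Icc (0:ℝ) 1) ∧
        v = FR q α lam CX CY X Y T w}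
      = sInf {v : ℝ | ∃ T, InU a b T ∧
        v = (∑ r, ridgeG α lam (score q X Y T r)) + α * gwTerm q CX CY T} := by
  apply csInf_eq_csInf_of_forall_exists_le
  · rintro x ⟨T, w, hT, hw, rfl⟩
    refine ⟨(∑ r, ridgeG α lam (score q X Y T r)) + α * gwTerm q CX CY T, ⟨T, hT, rfl⟩, ?_⟩
    rw [FR_rearrange]
    refine add_le_add (Finset.sum_le_sum fun r _ => ?_) le_rfl
    exact ridge_inner_le α lam _ (w r) hlam (hw r).2
  · rintro y ⟨T, hT, rfl⟩
    choose w hw0 hw1 hval using fun r =>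
      ridge_inner_exists α lam (score q X Y T r) hα.2 hlam
        (score_nonneg q X Y T hT.1 r)
    refine ⟨FR q α lam CX CY X Y T w, ⟨T, w, hT, fun r => ⟨hw0 r, hw1 r⟩, rfl⟩, ?_⟩
    rw [FR_rearrange]
    exact le_of_eq (by rw [Finset.sum_congr rfl fun r _ => hval r])
end

section
/- Discrete gluing with score and GW bounds: let a ∈ ℝ^n, b ∈ ℝ^m, c ∈ ℝ^p be probability vectors with b_j > 0 for every j, let T₁ ∈ U(a,b) and T₂ ∈ U(b,c), and define T₃ ∈ ℝ^{n×p} by (T₃)_{ik} = Σ_j T₁)_{ij} (T₂)_{jk} / b_j. Then T₃ ∈ U(a,c), and for every feature index r = 1,…,d, s_r^{XZ}(T₃) ≤ 2^{q−1} ( s_r^{XY}(T₁) + s_r^{YZ}(T₂) ), and GW^{XZ}(T₃) ≤ 2^{q−1} ( GW^{XY}(T₁) + GW^{YZ}(T₂) ); when q = 1 the factor 2^{q−1} equals 1. -/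
/-- `(u+v)^q ≤ 2^(q-1) (u^q + v^q)` for `u,v ≥ 0, q ≥ 1`. -/
lemma two_rpow_ineq (q : ℝ) (hq : 1 ≤ q) {u v : ℝ} (hu : 0 ≤ u) (hv : 0 ≤ v) :
    (u + v) ^ q ≤ (2:ℝ) ^ (q - 1) * (u ^ q + v ^ q) := by
  have hcv := convexOn_rpow hq
  have h2 := hcv.2 (Set.mem_Ici.2 hu) (Set.mem_Ici.2 hv)
    (by norm_num : (0:ℝ) ≤ (1/2 : ℝ)) (by norm_num : (0:ℝ) ≤ (1/2 : ℝ)) (by norm_num)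
  simp only [smul_eq_mul] at h2
  have hhalf : ((1/2 : ℝ) * u + (1/2 : ℝ) * v) ^ q = (u + v) ^ q / 2 ^ q := by
    have : (1/2 : ℝ) * u + (1/2 : ℝ) * v = (u + v) / 2 := by ring
    rw [this, Real.div_rpow (by positivity) (by norm_num)]
  rw [hhalf] at h2
  have h2q : (0:ℝ) < (2:ℝ) ^ q := Real.rpow_pos_of_pos (by norm_num) q
  have hfac : (2:ℝ) ^ (q - 1) = 2 ^ q / 2 := by
    rw [Real.rpow_sub (by norm_num : (0:ℝ) < 2), Real.rpow_one]
  rw [div_le_iff₀ h2q] at h2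
  rw [hfac]
  calc (u + v) ^ q ≤ ((1/2 : ℝ) * u ^ q + (1/2 : ℝ) * v ^ q) * 2 ^ q := h2
    _ = 2 ^ q / 2 * (u ^ q + v ^ q) := by ring

/-- Triangle-type inequality for `|·|^q`. -/
lemma abs_rpow_triangle (q : ℝ) (hq : 1 ≤ q) (x y z : ℝ) :
    |x - z| ^ q ≤ (2:ℝ) ^ (q - 1) * (|x - y| ^ q + |y - z| ^ q) := by
  have h1 : |x - z| ≤ |x - y| + |y - z| := abs_sub_le x y z
  have h2 : |x - z| ^ q ≤ (|x - y| + |y - z|) ^ q :=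
    Real.rpow_le_rpow (abs_nonneg _) h1 (le_trans zero_le_one hq)
  exact h2.trans (two_rpow_ineq q hq (abs_nonneg _) (abs_nonneg _))

/-- Generic gluing inequality. -/
lemma glue_le {ι κ μ : Type*} [Fintype ι] [Fintype κ] [Fintype μ]
    (w : ι → κ → μ → ℝ) (A : ι → κ → ℝ) (B : κ → μ → ℝ)
    (f : ι → μ → ℝ) (g : ι → κ → ℝ) (h : κ → μ → ℝ)
    (hw : ∀ i j k, 0 ≤ w i j k)
    (hA : ∀ i j, ∑ k, w i j k = A i j)
    (hB : ∀ j k, ∑ i, w i j k = B j k)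
    (hfgh : ∀ i j k, f i k ≤ g i j + h j k) :
    ∑ i, ∑ k, (∑ j, w i j k) * f i k ≤
      (∑ i, ∑ j, A i j * g i j) + (∑ j, ∑ k, B j k * h j k) := by
  have step1 : ∑ i, ∑ k, (∑ j, w i j k) * f i k
      ≤ ∑ i, ∑ k, ∑ j, (w i j k * g i j + w i j k * h j k) := by
    refine Finset.sum_le_sum fun i _ => Finset.sum_le_sum fun k _ => ?_
    rw [Finset.sum_mul]
    refine Finset.sum_le_sum fun j _ => ?_
    calc w i j k * f i k ≤ w i j k * (g i j + h j k) :=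
          mul_le_mul_of_nonneg_left (hfgh i j k) (hw i j k)
      _ = w i j k * g i j + w i j k * h j k := by ring
  refine step1.trans_eq ?_
  have hsplit : ∑ i, ∑ k, ∑ j, (w i j k * g i j + w i j k * h j k)
      = (∑ i, ∑ k, ∑ j, w i j k * g i j) + (∑ i, ∑ k, ∑ j, w i j k * h j k) := by
    simp [Finset.sum_add_distrib]
  rw [hsplit]
  congr 1
  · calc ∑ i, ∑ k, ∑ j, w i j k * g i j
        = ∑ i, ∑ j, ∑ k, w i j k * g i j :=
          Finset.sum_congr rfl fun i _ => Finset.sum_comm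
      _ = ∑ i, ∑ j, A i j * g i j := by
          refine Finset.sum_congr rfl fun i _ => Finset.sum_congr rfl fun j _ => ?_
          rw [← Finset.sum_mul, hA]
  · calc ∑ i, ∑ k, ∑ j, w i j k * h j k
        = ∑ i, ∑ j, ∑ k, w i j k * h j k :=
          Finset.sum_congr rfl fun i _ => Finset.sum_comm
      _ = ∑ j, ∑ i, ∑ k, w i j k * h j k := Finset.sum_comm
      _ = ∑ j, ∑ k, ∑ i, w i j k * h j k :=
          Finset.sum_congr rfl fun j _ => Finset.sum_comm
      _ = ∑ j, ∑ k, B j k * h j k := by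
          refine Finset.sum_congr rfl fun j _ => Finset.sum_congr rfl fun k _ => ?_
          rw [← Finset.sum_mul, hB]

/-- discrete gluing with feature-score and GW bounds. -/
theorem glued_coupling_bounds (n m p d : ℕ)
    (hn : 1 ≤ n) (hm : 1 ≤ m) (hp : 1 ≤ p) (hd : 1 ≤ d)
    (q : ℝ) (hq : 1 ≤ q)
    (a : Fin n → ℝ) (b : Fin m → ℝ) (c : Fin p → ℝ)
    (ha : IsProb a) (hb : IsProb b) (hc : IsProb c) (hbpos : ∀ j, 0 < b j)
    (CX : Matrix (Fin n) (Fin n) ℝ) (CY : Matrix (Fin m) (Fin m) ℝ)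
    (CZ : Matrix (Fin p) (Fin p) ℝ)
    (X : Matrix (Fin n) (Fin d) ℝ) (Y : Matrix (Fin m) (Fin d) ℝ)
    (Z : Matrix (Fin p) (Fin d) ℝ)
    (T1 : Matrix (Fin n) (Fin m) ℝ) (T2 : Matrix (Fin m) (Fin p) ℝ)
    (hT1 : InU a b T1) (hT2 : InU b c T2) :
    InU a c (fun i k => ∑ j, T1 i j * T2 j k / b j) ∧
    (∀ r, score q X Z (fun i k => ∑ j, T1 i j * T2 j k / b j) r ≤
      (2:ℝ) ^ (q - 1) * (score q X Y T1 r + score q Y Z T2 r)) ∧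
    gwTerm q CX CZ (fun i k => ∑ j, T1 i j * T2 j k / b j) ≤
      (2:ℝ) ^ (q - 1) * (gwTerm q CX CY T1 + gwTerm q CY CZ T2) ∧
    (q = 1 → (2:ℝ) ^ (q - 1) = 1) := by
  obtain ⟨hT1pos, hT1row, hT1col⟩ := hT1
  obtain ⟨hT2pos, hT2row, hT2col⟩ := hT2
  set M : ℝ := (2:ℝ) ^ (q - 1) with hM
  set w : Fin n → Fin m → Fin p → ℝ := fun i j k => T1 i j * T2 j k / b j with hw
  have hwpos : ∀ i j k, 0 ≤ w i j k := fun i j k =>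
    div_nonneg (mul_nonneg (hT1pos i j) (hT2pos j k)) (hbpos j).le
  have hA : ∀ i j, ∑ k, w i j k = T1 i j := by
    intro i j
    have he : ∀ k, w i j k = (T1 i j / b j) * T2 j k := fun k => by
      simp only [hw]; ring
    simp_rw [he]
    rw [← Finset.mul_sum, hT2row j, div_mul_cancel₀ _ (hbpos j).ne']
  have hB : ∀ j k, ∑ i, w i j k = T2 j k := by
    intro j k
    have he : ∀ i, w i j k = (T2 j k / b j) * T1 i j := fun i => by
      simp only [hw]; ring
    simp_rw [he]
    rw [← Finset.mul_sum, hT1col j, div_mul_cancel₀ _ (hbpos j).ne']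
  refine ⟨⟨fun i k => Finset.sum_nonneg fun j _ => hwpos i j k, ?_, ?_⟩, ?_, ?_, ?_⟩
  · -- row sums
    intro i
    rw [Finset.sum_comm]
    calc ∑ j, ∑ k, w i j k = ∑ j, T1 i j := Finset.sum_congr rfl fun j _ => hA i j
      _ = a i := hT1row i
  · -- column sums
    intro k
    rw [Finset.sum_comm]
    calc ∑ j, ∑ i, w i j k = ∑ j, T2 j k := Finset.sum_congr rfl fun j _ => hB j k
      _ = c k := hT2col k
  · -- score bound
    intro r
    have key := glue_le w T1 T2
      (fun i k => |X i r - Z k r| ^ q)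
      (fun i j => M * |X i r - Y j r| ^ q)
      (fun j k => M * |Y j r - Z k r| ^ q)
      hwpos hA hB
      (fun i j k => by
        have := abs_rpow_triangle q hq (X i r) (Y j r) (Z k r)
        rw [mul_add] at this; exact this)
    have e1 : ∑ i, ∑ j, T1 i j * (M * |X i r - Y j r| ^ q) = M * score q X Y T1 r := by
      simp only [score, Finset.mul_sum]
      exact Finset.sum_congr rfl fun i _ => Finset.sum_congr rfl fun j _ => by ring
    have e2 : ∑ j, ∑ k, T2 j k * (M * |Y j r - Z k r| ^ q) = M * score q Y Z T2 r := by
      simp only [score, Finset.mul_sum]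
      exact Finset.sum_congr rfl fun j _ => Finset.sum_congr rfl fun k _ => by ring
    rw [e1, e2] at key
    calc score q X Z (fun i k => ∑ j, T1 i j * T2 j k / b j) r
        = ∑ i, ∑ k, (∑ j, w i j k) * |X i r - Z k r| ^ q := rfl
      _ ≤ M * score q X Y T1 r + M * score q Y Z T2 r := key
      _ = M * (score q X Y T1 r + score q Y Z T2 r) := by ring
  · -- GW bound
    set W : Fin n × Fin n → Fin m × Fin m → Fin p × Fin p → ℝ :=
      fun I J K => w I.1 J.1 K.1 * w I.2 J.2 K.2 with hWdef
    have hWpos : ∀ I J K, 0 ≤ W I J K := fun I J K =>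
      mul_nonneg (hwpos _ _ _) (hwpos _ _ _)
    have hWA : ∀ I J, ∑ K, W I J K = T1 I.1 J.1 * T1 I.2 J.2 := by
      intro I J
      rw [Fintype.sum_prod_type]
      simp only [hWdef]
      rw [← Fintype.sum_mul_sum, hA, hA]
    have hWB : ∀ J K, ∑ I, W I J K = T2 J.1 K.1 * T2 J.2 K.2 := by
      intro J K
      rw [Fintype.sum_prod_type]
      simp only [hWdef]
      rw [← Fintype.sum_mul_sum, hB, hB]
    have key := glue_le W (fun I J => T1 I.1 J.1 * T1 I.2 J.2)
      (fun J K => T2 J.1 K.1 * T2 J.2 K.2)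
      (fun I K => |CX I.1 I.2 - CZ K.1 K.2| ^ q)
      (fun I J => M * |CX I.1 I.2 - CY J.1 J.2| ^ q)
      (fun J K => M * |CY J.1 J.2 - CZ K.1 K.2| ^ q)
      hWpos hWA hWB
      (fun I J K => by
        have := abs_rpow_triangle q hq (CX I.1 I.2) (CY J.1 J.2) (CZ K.1 K.2)
        rw [mul_add] at this; exact this)
    have eL : gwTerm q CX CZ (fun i k => ∑ j, T1 i j * T2 j k / b j)
        = ∑ I : Fin n × Fin n, ∑ K : Fin p × Fin p, (∑ J : Fin m × Fin m, W I J K) * |CX I.1 I.2 - CZ K.1 K.2| ^ q := by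
      simp only [gwTerm, Fintype.sum_prod_type]
      refine Finset.sum_congr rfl fun i _ => Finset.sum_congr rfl fun i' _ =>
        Finset.sum_congr rfl fun k _ => Finset.sum_congr rfl fun k' _ => ?_
      simp only [hWdef]
      rw [← Fintype.sum_mul_sum]
      ring
    have e1 : ∑ I : Fin n × Fin n, ∑ J : Fin m × Fin m, (T1 I.1 J.1 * T1 I.2 J.2) * (M * |CX I.1 I.2 - CY J.1 J.2| ^ q)
        = M * gwTerm q CX CY T1 := by
      simp only [gwTerm, Fintype.sum_prod_type, Finset.mul_sum]
      refine Finset.sum_congr rfl fun i _ => Finset.sum_congr rfl fun i' _ =>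
        Finset.sum_congr rfl fun j _ => Finset.sum_congr rfl fun j' _ => by ring
    have e2 : ∑ J : Fin m × Fin m, ∑ K : Fin p × Fin p, (T2 J.1 K.1 * T2 J.2 K.2) * (M * |CY J.1 J.2 - CZ K.1 K.2| ^ q)
        = M * gwTerm q CY CZ T2 := by
      simp only [gwTerm, Fintype.sum_prod_type, Finset.mul_sum]
      refine Finset.sum_congr rfl fun j _ => Finset.sum_congr rfl fun j' _ =>
        Finset.sum_congr rfl fun k _ => Finset.sum_congr rfl fun k' _ => by ring
    rw [e1, e2] at key
    rw [eL]
    calc ∑ I, ∑ K, (∑ J, W I J K) * |CX I.1 I.2 - CZ K.1 K.2| ^ q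
        ≤ M * gwTerm q CX CY T1 + M * gwTerm q CY CZ T2 := key
      _ = M * (gwTerm q CX CY T1 + gwTerm q CY CZ T2) := by ring
  · intro hq1
    simp [hM, hq1]
end
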